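/- Let A be a bounded linear operator on H. Then η(A)² ≤ (1/4)·‖ |A| + |A*| ‖_ber² + (1/4)·ber( 2|A|² + |A| − |A*| ) · ber( 2|A|² − |A| + |A*| ). -/

import Mathlib

open scoped InnerProductSpace
open ContinuousLinearMap

variable {H : Type*} [NormedAddCommGroup H] [InnerProductSpace ℂ H] [CompleteSpace H]
variable {Ω : Type*} [Nonempty Ω]

/-- Berezin number: `ber(T) = sup_{λ∈Ω} |⟨T k̂_λ, k̂_λ⟩|`. -/
noncomputable def ber (k : Ω → H) (T : H →L[ℂ] H) : ℝ :=
  ⨆ lam : Ω, ‖⟪T (k lam), k lam⟫_ℂ‖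

/-- Berezin norm: `‖T‖_ber = sup_{λ,μ∈Ω} |⟨T k̂_λ, k̂_μ⟩|`. -/
noncomputable def bernorm (k : Ω → H) (T : H →L[ℂ] H) : ℝ :=
  ⨆ p : Ω × Ω, ‖⟪T (k p.1), k p.2⟫_ℂ‖

/-- Least Berezin number: `c(T) = inf_{λ∈Ω} |⟨T k̂_λ, k̂_λ⟩|`. -/
noncomputable def lber (k : Ω → H) (T : H →L[ℂ] H) : ℝ :=
  ⨅ lam : Ω, ‖⟪T (k lam), k lam⟫_ℂ‖

/-- Davis-Wielandt-Berezin radius: `η(T) = sup_{λ∈Ω} √(|⟨T k̂_λ, k̂_λ⟩|² + ‖T k̂_λ‖⁴)`. -/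
noncomputable def eta (k : Ω → H) (T : H →L[ℂ] H) : ℝ :=
  ⨆ lam : Ω, Real.sqrt (‖⟪T (k lam), k lam⟫_ℂ‖ ^ 2 + ‖T (k lam)‖ ^ 4)

/-- The modulus `|A| = (A*A)^{1/2}`. -/
noncomputable def absop (A : H →L[ℂ] H) : H →L[ℂ] H := CFC.sqrt (adjoint A * A)

set_option maxHeartbeats 2000000
set_option synthInstance.maxHeartbeats 2000000

section auxDWB

theorem interPow (A : H →L[ℂ] H) (n : ℕ) : A * (adjoint A * A)^n = (A * adjoint A)^n * A := by
  induction n with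
  | zero => simp
  | succ n ih => rw [pow_succ, pow_succ, ← mul_assoc, ih]; simp [mul_assoc]

theorem interPoly (A : H →L[ℂ] H) (q : Polynomial ℝ) :
    A * Polynomial.aeval (adjoint A * A) q = Polynomial.aeval (A * adjoint A) q * A := by
  rw [Polynomial.aeval_eq_sum_range, Polynomial.aeval_eq_sum_range, Finset.mul_sum, Finset.sum_mul]
  refine Finset.sum_congr rfl fun i _ => ?_
  rw [mul_smul_comm, smul_mul_assoc, interPow]

theorem intertwine (A : H →L[ℂ] H) (g : ℝ → ℝ) (hg : Continuous g) :
    A * cfc g (adjoint A * A) = cfc g (A * adjoint A) * A := by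
  set T := adjoint A * A with hT
  set T' := A * adjoint A with hT'
  have hTnn : (0:H→L[ℂ]H) ≤ T := by simpa [star_eq_adjoint] using star_mul_self_nonneg A
  have hT'nn : (0:H→L[ℂ]H) ≤ T' := by simpa [star_eq_adjoint] using mul_star_self_nonneg A
  have hTsa : IsSelfAdjoint T := .of_nonneg hTnn
  have hT'sa : IsSelfAdjoint T' := .of_nonneg hT'nn
  set M : ℝ := max (‖T‖ * ‖(1:H→L[ℂ]H)‖) (‖T'‖ * ‖(1:H→L[ℂ]H)‖) with hM
  have hm1 : ‖T‖ * ‖(1:H→L[ℂ]H)‖ ≤ M := le_max_left _ _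
  have hm2 : ‖T'‖ * ‖(1:H→L[ℂ]H)‖ ≤ M := le_max_right _ _
  have hsp : spectrum ℝ T ⊆ Set.Icc (-M) M := by
    intro x hx
    have h := spectrum.subset_closedBall_norm_mul (𝕜 := ℝ) T hx
    rw [Real.closedBall_eq_Icc] at h
    exact ⟨by linarith [h.1], by linarith [h.2]⟩
  have hsp' : spectrum ℝ T' ⊆ Set.Icc (-M) M := by
    intro x hx
    have h := spectrum.subset_closedBall_norm_mul (𝕜 := ℝ) T' hx
    rw [Real.closedBall_eq_Icc] at h
    exact ⟨by linarith [h.1], by linarith [h.2]⟩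
  rw [← sub_eq_zero, ← norm_le_zero_iff]
  refine le_of_forall_pos_le_add fun δ hδ => ?_
  rw [zero_add]
  set err := δ / (2 * ‖A‖ + 1) with herr
  have herr0 : 0 < err := by positivity
  obtain ⟨q, hq⟩ := exists_polynomial_near_of_continuousOn (-M) M g hg.continuousOn err herr0
  have h1 : ‖cfc (fun t => g t - q.eval t) T‖ ≤ err := by
    refine norm_cfc_le herr0.le fun x hx => ?_
    rw [Real.norm_eq_abs, abs_sub_comm]
    exact (hq x (hsp hx)).le
  have h2 : ‖cfc (fun t => g t - q.eval t) T'‖ ≤ err := by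
    refine norm_cfc_le herr0.le fun x hx => ?_
    rw [Real.norm_eq_abs, abs_sub_comm]
    exact (hq x (hsp' hx)).le
  have key : A * cfc g T - cfc g T' * A
      = A * cfc (fun t => g t - q.eval t) T - cfc (fun t => g t - q.eval t) T' * A := by
    rw [cfc_sub _ _ T, cfc_sub _ _ T', cfc_polynomial q T, cfc_polynomial q T',
      mul_sub, sub_mul, interPoly A q]
    abel
  rw [key]
  have e1 : ‖A * cfc (fun t => g t - q.eval t) T‖ ≤ ‖A‖ * err :=
    (norm_mul_le _ _).trans (mul_le_mul_of_nonneg_left h1 (norm_nonneg A))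
  have e2 : ‖cfc (fun t => g t - q.eval t) T' * A‖ ≤ err * ‖A‖ :=
    (norm_mul_le _ _).trans (mul_le_mul_of_nonneg_right h2 (norm_nonneg A))
  have e3 : ‖A‖ * err + err * ‖A‖ ≤ δ := by
    have hA : (0:ℝ) ≤ ‖A‖ := norm_nonneg A
    have : (2 * ‖A‖ + 1) * err = δ := mul_div_cancel₀ δ (by positivity)
    nlinarith [herr0.le]
  exact (norm_sub_le _ _).trans (by linarith)

theorem absop_eq (A : H →L[ℂ] H) : absop A = cfc Real.sqrt (adjoint A * A) := by
  have hTnn : (0:H→L[ℂ]H) ≤ adjoint A * A := by simpa [star_eq_adjoint] using star_mul_self_nonneg A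
  rw [absop, CFC.sqrt_eq_real_sqrt _ hTnn, cfcₙ_eq_cfc]

theorem absop_nonneg (A : H →L[ℂ] H) : (0:H→L[ℂ]H) ≤ absop A := CFC.sqrt_nonneg _

theorem absop_sq (A : H →L[ℂ] H) : absop A * absop A = adjoint A * A := by
  have hTnn : (0:H→L[ℂ]H) ≤ adjoint A * A := by simpa [star_eq_adjoint] using star_mul_self_nonneg A
  exact CFC.sqrt_mul_sqrt_self _ hTnn

theorem sa_move (S : H →L[ℂ] H) (hS : IsSelfAdjoint S) (z w : H) :
    ⟪S z, w⟫_ℂ = ⟪z, S w⟫_ℂ := by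
  nth_rewrite 1 [← hS.adjoint_eq]
  apply adjoint_inner_left

theorem mixedSchwarz (A : H →L[ℂ] H) (x y : H) :
    ‖⟪A x, y⟫_ℂ‖ ^ 2 ≤
      RCLike.re ⟪absop A x, x⟫_ℂ * RCLike.re ⟪absop (adjoint A) y, y⟫_ℂ := by
  set T := adjoint A * A with hT
  set T' := A * adjoint A with hT'
  have hTnn : (0:H→L[ℂ]H) ≤ T := by simpa [star_eq_adjoint] using star_mul_self_nonneg A
  have hT'nn : (0:H→L[ℂ]H) ≤ T' := by simpa [star_eq_adjoint] using mul_star_self_nonneg A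
  have hTsa : IsSelfAdjoint T := .of_nonneg hTnn
  have hT'sa : IsSelfAdjoint T' := .of_nonneg hT'nn
  have habs : absop A = cfc Real.sqrt T := absop_eq A
  have habs' : absop (adjoint A) = cfc Real.sqrt T' := by
    rw [absop_eq, adjoint_adjoint]
  set a := RCLike.re ⟪absop A x, x⟫_ℂ with ha
  set b := RCLike.re ⟪absop (adjoint A) y, y⟫_ℂ with hbdef
  have hb : 0 ≤ b := ((nonneg_iff_isPositive _).mp (absop_nonneg (adjoint A))).re_inner_nonneg_left y
  have key : ∀ ε : ℝ, 0 < ε → ‖⟪A x, y⟫_ℂ‖ ^ 2 ≤ (a + ε * ‖x‖ ^ 2) * b := by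
    intro ε hε
    set u : ℝ → ℝ := fun t => Real.sqrt (Real.sqrt t + ε) with hu
    have hupos : ∀ t, 0 < u t := fun t =>
      Real.sqrt_pos.mpr (by positivity)
    have hucont : Continuous u := (Real.continuous_sqrt.add continuous_const).sqrt
    set v : ℝ → ℝ := fun t => (u t)⁻¹ with hv
    have hvcont : Continuous v := hucont.inv₀ fun t => (hupos t).ne'
    set w : ℝ → ℝ := fun t => (Real.sqrt t + ε)⁻¹ with hwdef
    have hwcont : Continuous w :=
      (Real.continuous_sqrt.add continuous_const).inv₀ fun t => (add_pos_of_nonneg_of_pos (Real.sqrt_nonneg t) hε).ne'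
    set U := cfc u T with hU
    set V := cfc v T with hV
    have hUsa : IsSelfAdjoint U := cfc_predicate u T
    have hVsa : IsSelfAdjoint V := cfc_predicate v T
    have hcfc_mul2 : ∀ (f g : ℝ → ℝ), Continuous f → Continuous g →
        cfc f T * cfc g T = cfc (fun t => f t * g t) T := fun f g hf hg =>
      (cfc_mul f g T hf.continuousOn hg.continuousOn).symm
    have hUU : U * U = absop A + ε • (1:H→L[ℂ]H) := by
      rw [hU, hcfc_mul2 u u hucont hucont]
      have h1 : (fun t => u t * u t) = fun t => Real.sqrt t + ε := by
        funext t; exact Real.mul_self_sqrt (by positivity)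
      rw [h1, cfc_add T Real.sqrt (fun _ => ε) Real.continuous_sqrt.continuousOn
        continuousOn_const, cfc_const ε T, habs, Algebra.algebraMap_eq_smul_one]
    have hVUU : V * (U * U) = U := by
      rw [hV, hU, hcfc_mul2 u u hucont hucont, hcfc_mul2 v (fun t => u t * u t) hvcont (hucont.mul hucont)]
      refine cfc_congr fun t _ => ?_
      show (u t)⁻¹ * (u t * u t) = u t
      field_simp
    have hone : V * (V * (U * U)) = 1 := by
      rw [hVUU, hV, hU, hcfc_mul2 v u hvcont hucont]
      have h1 : (fun t => v t * u t) = fun _ => (1:ℝ) := by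
        funext t; exact inv_mul_cancel₀ (hupos t).ne'
      rw [h1, cfc_const 1 T, map_one]
    have hVV : V * V = cfc w T := by
      rw [hV, hcfc_mul2 v v hvcont hvcont]
      refine cfc_congr fun t _ => ?_
      show (u t)⁻¹ * (u t)⁻¹ = (Real.sqrt t + ε)⁻¹
      rw [← mul_inv]
      congr 1
      exact Real.mul_self_sqrt (by positivity)
    -- first factor
    have hUx : ‖U x‖ ^ 2 = a + ε * ‖x‖ ^ 2 := by
      have h1 : ⟪(U * U) x, x⟫_ℂ = ⟪U x, U x⟫_ℂ := by
        rw [ContinuousLinearMap.mul_apply, sa_move U hUsa]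
      have h2 : RCLike.re ⟪(U * U) x, x⟫_ℂ = ‖U x‖ ^ 2 := by
        rw [h1, inner_self_eq_norm_sq]
      rw [← h2, hUU]
      simp only [ContinuousLinearMap.add_apply, ContinuousLinearMap.smul_apply, ContinuousLinearMap.one_apply, inner_add_left, map_add]
      congr 1
      rw [show (ε • x : H) = ((ε : ℂ) • x : H) by norm_num, inner_smul_left]
      simp [inner_self_eq_norm_sq]
      left; rw [← Complex.ofReal_pow, Complex.ofReal_re]
    have hax : 0 ≤ a + ε * ‖x‖ ^ 2 := hUx ▸ sq_nonneg ‖U x‖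
    -- second factor
    set W := A * (V * V) * adjoint A with hWop
    have hVy : ‖V (adjoint A y)‖ ^ 2 = RCLike.re ⟪W y, y⟫_ℂ := by
      have h1 : ⟪V (adjoint A y), V (adjoint A y)⟫_ℂ = ⟪y, W y⟫_ℂ := by
        rw [sa_move V hVsa, ← ContinuousLinearMap.mul_apply V V]
        rw [adjoint_inner_left]
        simp [hWop, ContinuousLinearMap.mul_apply]
      have h2 : RCLike.re ⟪y, W y⟫_ℂ = RCLike.re ⟪W y, y⟫_ℂ :=
        inner_re_symm _ _
      rw [← inner_self_eq_norm_sq (𝕜 := ℂ), h1, h2]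
    have hcfc_mul2' : ∀ (f g : ℝ → ℝ), Continuous f → Continuous g →
        cfc f T' * cfc g T' = cfc (fun t => f t * g t) T' := fun f g hf hg =>
      (cfc_mul f g T' hf.continuousOn hg.continuousOn).symm
    have hWle : W ≤ absop (adjoint A) := by
      have h1 : W = cfc (fun t => w t * t) T' := by
        rw [hWop, hVV, intertwine A w hwcont, mul_assoc, ← hT']
        nth_rewrite 2 [← cfc_id' ℝ T']
        exact hcfc_mul2' w (fun t => t) hwcont continuous_id
      rw [h1, habs']
      refine cfc_mono (fun t ht => ?_) ((hwcont.mul continuous_id).continuousOn)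
        Real.continuous_sqrt.continuousOn
      have ht0 : 0 ≤ t := spectrum_nonneg_of_nonneg hT'nn ht
      show (Real.sqrt t + ε)⁻¹ * t ≤ Real.sqrt t
      rw [inv_mul_eq_div, div_le_iff₀ (by positivity)]
      nlinarith [Real.sq_sqrt ht0, Real.sqrt_nonneg t]
    have hWy : RCLike.re ⟪W y, y⟫_ℂ ≤ b := by
      have h0 := ((le_def W (absop (adjoint A))).mp hWle).re_inner_nonneg_left y
      have h1 : RCLike.re ⟪(absop (adjoint A) - W) y, y⟫_ℂ
          = b - RCLike.re ⟪W y, y⟫_ℂ := by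
        simp [ContinuousLinearMap.sub_apply, inner_sub_left, hbdef]
      linarith [h1 ▸ h0]
    -- the inner product identity
    have hinner : ⟪A x, y⟫_ℂ = ⟪U x, V (adjoint A y)⟫_ℂ := by
      conv_lhs => rw [show x = (V * (V * (U * U))) x by rw [hone, ContinuousLinearMap.one_apply]]
      rw [ContinuousLinearMap.mul_apply, ← adjoint_inner_right, sa_move V hVsa]
      congr 1
      rw [hVUU]
    have hnorm : ‖⟪A x, y⟫_ℂ‖ ≤ ‖U x‖ * ‖V (adjoint A y)‖ := by
      rw [hinner]; exact norm_inner_le_norm _ _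
    calc ‖⟪A x, y⟫_ℂ‖ ^ 2 ≤ (‖U x‖ * ‖V (adjoint A y)‖) ^ 2 := by
          exact pow_le_pow_left₀ (norm_nonneg _) hnorm 2
      _ = ‖U x‖ ^ 2 * ‖V (adjoint A y)‖ ^ 2 := by ring
      _ = (a + ε * ‖x‖ ^ 2) * RCLike.re ⟪W y, y⟫_ℂ := by rw [hUx, hVy]
      _ ≤ (a + ε * ‖x‖ ^ 2) * b := by
          exact mul_le_mul_of_nonneg_left hWy hax
  refine le_of_forall_pos_le_add fun δ hδ => ?_
  set C := ‖x‖ ^ 2 * b with hC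
  have hC0 : 0 ≤ C := mul_nonneg (sq_nonneg _) hb
  have hεpos : 0 < δ / (C + 1) := by positivity
  have h := key (δ / (C + 1)) hεpos
  have : (a + δ / (C + 1) * ‖x‖ ^ 2) * b = a * b + δ / (C + 1) * C := by ring
  rw [this] at h
  have h2 : δ / (C + 1) * C ≤ δ := by
    rw [div_mul_eq_mul_div, div_le_iff₀ (by positivity)]
    nlinarith
  linarith

theorem ber_nonneg (k : Ω → H) (T : H →L[ℂ] H) : 0 ≤ ber k T :=
  Real.iSup_nonneg fun _ => norm_nonneg _

theorem bernorm_nonneg (k : Ω → H) (T : H →L[ℂ] H) : 0 ≤ bernorm k T :=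
  Real.iSup_nonneg fun _ => norm_nonneg _

theorem le_ber (k : Ω → H) (hk : ∀ lam, ‖k lam‖ = 1) (T : H →L[ℂ] H) (lam : Ω) :
    ‖⟪T (k lam), k lam⟫_ℂ‖ ≤ ber k T := by
  refine le_ciSup (f := fun lam : Ω => ‖⟪T (k lam), k lam⟫_ℂ‖) ⟨‖T‖, ?_⟩ lam
  rintro - ⟨mu, rfl⟩
  calc ‖⟪T (k mu), k mu⟫_ℂ‖ ≤ ‖T (k mu)‖ * ‖k mu‖ := norm_inner_le_norm _ _
    _ ≤ (‖T‖ * ‖k mu‖) * ‖k mu‖ := by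
        exact mul_le_mul_of_nonneg_right (T.le_opNorm _) (norm_nonneg _)
    _ = ‖T‖ := by rw [hk mu]; ring

theorem le_bernorm (k : Ω → H) (hk : ∀ lam, ‖k lam‖ = 1) (T : H →L[ℂ] H) (lam : Ω) :
    ‖⟪T (k lam), k lam⟫_ℂ‖ ≤ bernorm k T := by
  refine le_ciSup (f := fun p : Ω × Ω => ‖⟪T (k p.1), k p.2⟫_ℂ‖) ⟨‖T‖, ?_⟩ (lam, lam)
  rintro - ⟨p, rfl⟩
  calc ‖⟪T (k p.1), k p.2⟫_ℂ‖ ≤ ‖T (k p.1)‖ * ‖k p.2‖ := norm_inner_le_norm _ _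
    _ ≤ (‖T‖ * ‖k p.1‖) * ‖k p.2‖ := by
        exact mul_le_mul_of_nonneg_right (T.le_opNorm _) (norm_nonneg _)
    _ = ‖T‖ := by rw [hk p.1, hk p.2]; ring


end auxDWB

theorem stmt7 (k : Ω → H) (hk : ∀ lam, ‖k lam‖ = 1) (A : H →L[ℂ] H) :
    (eta k A) ^ 2 ≤
      (1 / 4) * (bernorm k (absop A + absop (adjoint A))) ^ 2 +
        (1 / 4) * ber k (2 • (absop A) ^ 2 + absop A - absop (adjoint A)) *
          ber k (2 • (absop A) ^ 2 - absop A + absop (adjoint A)) := by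
  set S₁ := 2 • (absop A) ^ 2 + absop A - absop (adjoint A) with hS₁
  set S₂ := 2 • (absop A) ^ 2 - absop A + absop (adjoint A) with hS₂
  set B₁ := ber k S₁ with hB₁
  set B₂ := ber k S₂ with hB₂
  set N := bernorm k (absop A + absop (adjoint A)) with hN
  have hB₁0 : 0 ≤ B₁ := ber_nonneg k S₁
  have hB₂0 : 0 ≤ B₂ := ber_nonneg k S₂
  have hN0 : 0 ≤ N := bernorm_nonneg k _
  set R := (1/4) * N^2 + (1/4) * (B₁ * B₂) with hR
  have hR0 : 0 ≤ R := by positivity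
  have hpt : ∀ lam : Ω, ‖⟪A (k lam), k lam⟫_ℂ‖ ^ 2 + ‖A (k lam)‖ ^ 4 ≤ R := by
    intro lam
    set x := k lam with hx
    have hx1 : ‖x‖ = 1 := hk lam
    set a := RCLike.re ⟪absop A x, x⟫_ℂ with hadef
    set b := RCLike.re ⟪absop (adjoint A) x, x⟫_ℂ with hbdef
    set t := ‖A x‖^2 with htdef
    have ha0 : 0 ≤ a := ((nonneg_iff_isPositive _).mp (absop_nonneg A)).re_inner_nonneg_left x
    have hb0 : 0 ≤ b :=
      ((nonneg_iff_isPositive _).mp (absop_nonneg (adjoint A))).re_inner_nonneg_left x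
    have hms : ‖⟪A x, x⟫_ℂ‖ ^ 2 ≤ a * b := mixedSchwarz A x x
    have htt : RCLike.re ⟪((absop A)^2) x, x⟫_ℂ = t := by
      rw [sq, absop_sq, ContinuousLinearMap.mul_apply, adjoint_inner_left, inner_self_eq_norm_sq (𝕜 := ℂ)]
    have hf1 : RCLike.re ⟪S₁ x, x⟫_ℂ = 2*t + a - b := by
      rw [hS₁, two_smul]
      simp only [ContinuousLinearMap.add_apply, ContinuousLinearMap.sub_apply, inner_add_left, inner_sub_left, map_add, map_sub]
      rw [htt]; ring
    have hf2 : RCLike.re ⟪S₂ x, x⟫_ℂ = 2*t - a + b := by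
      rw [hS₂, two_smul]
      simp only [ContinuousLinearMap.add_apply, ContinuousLinearMap.sub_apply, inner_add_left, inner_sub_left, map_add, map_sub]
      rw [htt]; ring
    have hab : a + b ≤ N := by
      have h1 : a + b = RCLike.re ⟪(absop A + absop (adjoint A)) x, x⟫_ℂ := by
        simp only [ContinuousLinearMap.add_apply, inner_add_left, map_add]
        rfl
      rw [h1]
      exact (RCLike.re_le_norm _).trans (le_bernorm k hk _ lam)
    have hab2 : (a + b)^2 ≤ N^2 := pow_le_pow_left₀ (by linarith) hab 2
    have hb1 : |2*t + a - b| ≤ B₁ := by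
      rw [← hf1]
      exact (RCLike.abs_re_le_norm _).trans (le_ber k hk S₁ lam)
    have hb2 : |2*t - a + b| ≤ B₂ := by
      rw [← hf2]
      exact (RCLike.abs_re_le_norm _).trans (le_ber k hk S₂ lam)
    have hprod : (2*t + a - b) * (2*t - a + b) ≤ B₁ * B₂ := by
      calc (2*t + a - b) * (2*t - a + b) ≤ |(2*t + a - b) * (2*t - a + b)| := le_abs_self _
        _ = |2*t + a - b| * |2*t - a + b| := abs_mul _ _
        _ ≤ B₁ * B₂ := mul_le_mul hb1 hb2 (abs_nonneg _) hB₁0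
    have hident : a*b + t^2 = (1/4)*(a+b)^2 + (1/4)*((2*t + a - b) * (2*t - a + b)) := by ring
    have h4 : ‖A x‖ ^ 4 = t^2 := by rw [htdef]; ring
    rw [h4, hR]
    linarith [hms, hab2, hprod, hident]
  have heta : eta k A ≤ Real.sqrt R := by
    refine Real.iSup_le (fun lam => ?_) (Real.sqrt_nonneg _)
    exact Real.sqrt_le_sqrt (hpt lam)
  have heta0 : 0 ≤ eta k A := Real.iSup_nonneg fun _ => Real.sqrt_nonneg _
  calc (eta k A)^2 ≤ (Real.sqrt R)^2 := pow_le_pow_left₀ heta0 heta 2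
    _ = R := Real.sq_sqrt hR0
    _ = (1 / 4) * N ^ 2 + (1 / 4) * B₁ * B₂ := by rw [hR]; ring
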